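/- Let ρ be a solution notion that is both dissectible and monotonic, and let f : Θ → X be a social choice function. Then the canonical semi-operator γ^{(ρ,f)} is increasing: for all nonempty E, E' ⊆ Θ and every θ ∈ Θ, if θ ∈ E ⊆ E' then γ^{(ρ,f)}[E,θ] ⊆ γ^{(ρ,f)}[E',θ]. -/
import Mathlib


open scoped Classical

namespace SeqMech

variable {I : Type*} {Θi : I → Type*} {X : Type*}

/-- Projection of a set of states onto agent `i`'s coordinate. -/
def proj (i : I) (E : Set (∀ j, Θi j)) : Set (Θi i) :=
  (fun θ => θ i) '' E

/-- Projection of a set of states onto the coordinates of the agents other than `i`. -/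
def projNeg (i : I) (E : Set (∀ j, Θi j)) :
    Set (∀ j : {j : I // j ≠ i}, Θi j.1) :=
  (fun θ (j : {j : I // j ≠ i}) => θ j.1) '' E

/-- The semi-operator property: nonempty sets are mapped to nonempty sets. -/
def IsSemiOp (γ : Set (∀ j, Θi j) → (∀ j, Θi j) → Set (∀ j, Θi j)) : Prop :=
  ∀ E θ, E.Nonempty → (γ E θ).Nonempty

/-- A solution notion: `R f γ E θ θ' i Fhat` means `ρ[f,(γ,E),θ,θ',i,Fhat] = 1`.  Its value
depends only on `(f, γ_i[E,θ], θ_i, θ'_i, Fhat_{-i})`. -/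
structure SolutionNotion (I : Type*) (Θi : I → Type*) (X : Type*) where
  R : ((∀ j, Θi j) → X) →
      (Set (∀ j, Θi j) → (∀ j, Θi j) → Set (∀ j, Θi j)) →
      Set (∀ j, Θi j) → (∀ j, Θi j) → (∀ j, Θi j) → I → Set (∀ j, Θi j) → Prop
  meas : ∀ f γ γ' E E' θ τ θ' τ' (i : I) Fhat Fhat',
      proj i (γ E θ) = proj i (γ' E' τ) →
      θ i = τ i → θ' i = τ' i →
      projNeg i Fhat = projNeg i Fhat' →
      (R f γ E θ θ' i Fhat ↔ R f γ' E' τ τ' i Fhat')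

/-- Dissectibility of a solution notion. -/
def Dissectible (ρ : SolutionNotion I Θi X) : Prop :=
  ∀ f γ E θ θ' (i : I) Fhat,
    IsSemiOp γ → E.Nonempty → θ ∈ E → θ' ∈ E →
    (¬ ρ.R f γ E θ θ' i Fhat ↔
      ∃ τ ∈ γ E θ, ∃ γ' : Set (∀ j, Θi j) → (∀ j, Θi j) → Set (∀ j, Θi j),
        IsSemiOp γ' ∧ γ' E θ = {θ, τ} ∧ ¬ ρ.R f γ' E θ θ' i Fhat)

/-- `θ >_i^{[(ρ,f),(γ,E)]} θ'`. -/
def gtRel (ρ : SolutionNotion I Θi X) (f : (∀ j, Θi j) → X)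
    (γ : Set (∀ j, Θi j) → (∀ j, Θi j) → Set (∀ j, Θi j))
    (E : Set (∀ j, Θi j)) (i : I) (θ θ' : ∀ j, Θi j) : Prop :=
  θ ∈ E ∧ θ' ∈ E ∧ ¬ ρ.R f γ E θ θ' i E

/-- `θ ∼_i^{[(ρ,f),(γ,E)]} θ'`. -/
def simRel (ρ : SolutionNotion I Θi X) (f : (∀ j, Θi j) → X)
    (γ : Set (∀ j, Θi j) → (∀ j, Θi j) → Set (∀ j, Θi j))
    (E : Set (∀ j, Θi j)) (i : I) (θ θ' : ∀ j, Θi j) : Prop :=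
  θ i = θ' i ∨ gtRel ρ f γ E i θ θ' ∨ gtRel ρ f γ E i θ' θ

/-- `canonN ρ f n` is the semi-operator `γ^{(ρ,f)-(n+1)}`. -/
noncomputable def canonN (ρ : SolutionNotion I Θi X) (f : (∀ j, Θi j) → X) :
    ℕ → Set (∀ j, Θi j) → (∀ j, Θi j) → Set (∀ j, Θi j)
  | 0 => fun E θ => if θ ∈ E then {θ} else E
  | n + 1 => fun E θ =>
      if θ ∈ E then
        ⋃ τ ∈ canonN ρ f n E θ,
          {θ' ∈ E | ∀ i, simRel ρ f (canonN ρ f n) E i τ θ'}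
      else E

/-- The canonical semi-operator `γ^{(ρ,f)}`. -/
noncomputable def canon (ρ : SolutionNotion I Θi X) (f : (∀ j, Θi j) → X) :
    Set (∀ j, Θi j) → (∀ j, Θi j) → Set (∀ j, Θi j) :=
  fun E θ => if θ ∈ E then ⋃ n, canonN ρ f n E θ else E

/-- Monotonicity of a solution notion. -/
def Monotonic (ρ : SolutionNotion I Θi X) : Prop :=
  ∀ f γ E θ θ' (i : I) (Fhat Ftil : Set (∀ j, Θi j)),
    IsSemiOp γ → E.Nonempty → Fhat ⊆ Ftil →
    ¬ ρ.R f γ E θ θ' i Fhat → ¬ ρ.R f γ E θ θ' i Ftil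

lemma mem_canonN_self (ρ : SolutionNotion I Θi X) (f : (∀ j, Θi j) → X) :
    ∀ n E θ, θ ∈ E → θ ∈ canonN ρ f n E θ := by
  intro n
  induction n with
  | zero => intro E θ hθ; simp [canonN, hθ]
  | succ n ih =>
    intro E θ hθ
    simp only [canonN, if_pos hθ, Set.mem_iUnion]
    exact ⟨θ, ih E θ hθ, hθ, fun i => Or.inl rfl⟩

lemma canonN_subset (ρ : SolutionNotion I Θi X) (f : (∀ j, Θi j) → X) :
    ∀ n E θ, θ ∈ E → canonN ρ f n E θ ⊆ E := by
  intro n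
  cases n with
  | zero => intro E θ hθ; simp [canonN, hθ]
  | succ n =>
    intro E θ hθ σ hσ
    simp only [canonN, if_pos hθ, Set.mem_iUnion] at hσ
    obtain ⟨τ, _, hσE, _⟩ := hσ
    exact hσE

lemma canonN_isSemiOp (ρ : SolutionNotion I Θi X) (f : (∀ j, Θi j) → X) (n : ℕ) :
    IsSemiOp (canonN ρ f n) := by
  intro E θ hE
  by_cases hθ : θ ∈ E
  · exact ⟨θ, mem_canonN_self ρ f n E θ hθ⟩
  · cases n with
    | zero => simpa [canonN, hθ] using hE
    | succ n => simpa [canonN, hθ] using hE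

lemma canonN_increasing (ρ : SolutionNotion I Θi X) (hD : Dissectible ρ) (hM : Monotonic ρ)
    (f : (∀ j, Θi j) → X)
    (E E' : Set (∀ j, Θi j)) (hE : E.Nonempty) (hE' : E'.Nonempty) (hEE' : E ⊆ E') :
    ∀ n, ∀ θ ∈ E, canonN ρ f n E θ ⊆ canonN ρ f n E' θ := by
  intro n
  induction n with
  | zero =>
    intro θ hθ
    simp [canonN, hθ, hEE' hθ]
  | succ n ih =>
    -- key step: ¬R transports from (E, E) to (E', E')
    have hkey : ∀ τ σ (i : I), τ ∈ E → σ ∈ E →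
        ¬ ρ.R f (canonN ρ f n) E τ σ i E → ¬ ρ.R f (canonN ρ f n) E' τ σ i E' := by
      intro τ σ i hτ hσ hne
      have hsemi := canonN_isSemiOp ρ f n
      rw [hD f (canonN ρ f n) E τ σ i E hsemi hE hτ hσ] at hne
      obtain ⟨τt, hτt, γ', hγ'semi, hγ'eq, hγ'R⟩ := hne
      have h2 : ¬ ρ.R f γ' E τ σ i E' :=
        hM f γ' E τ σ i E E' hγ'semi hE hEE' hγ'R
      classical
      set γ'' : Set (∀ j, Θi j) → (∀ j, Θi j) → Set (∀ j, Θi j) :=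
        fun F s => if F = E' ∧ s = τ then {τ, τt} else {s} with hγ''def
      have hγ''semi : IsSemiOp γ'' := by
        intro F s _
        by_cases h : F = E' ∧ s = τ <;> simp [hγ''def, h]
      have hγ''eq : γ'' E' τ = {τ, τt} := by simp [hγ''def]
      have h3 : ¬ ρ.R f γ'' E' τ σ i E' := by
        intro h
        exact h2 ((ρ.meas f γ' γ'' E E' τ τ σ σ i E' E'
          (by rw [hγ'eq, hγ''eq]) rfl rfl rfl).mpr h)
      rw [hD f (canonN ρ f n) E' τ σ i E' hsemi hE' (hEE' hτ) (hEE' hσ)]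
      exact ⟨τt, ih τ hτ hτt, γ'', hγ''semi, hγ''eq, h3⟩
    intro θ hθ σ hσ
    simp only [canonN, if_pos hθ, Set.mem_iUnion] at hσ
    obtain ⟨τ, hτ, hσE, hsim⟩ := hσ
    have hτE : τ ∈ E := canonN_subset ρ f n E θ hθ hτ
    simp only [canonN, if_pos (hEE' hθ), Set.mem_iUnion]
    refine ⟨τ, ih θ hθ hτ, hEE' hσE, fun i => ?_⟩
    rcases hsim i with h | ⟨_, _, hR⟩ | ⟨_, _, hR⟩
    · exact Or.inl h
    · exact Or.inr (Or.inl ⟨hEE' hτE, hEE' hσE, hkey τ σ i hτE hσE hR⟩)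
    · exact Or.inr (Or.inr ⟨hEE' hσE, hEE' hτE, hkey σ τ i hσE hτE hR⟩)

/-- for a dissectible and monotonic solution notion `ρ` and an SCF `f`,
the canonical semi-operator `γ^{(ρ,f)}` is increasing. -/
theorem canon_increasing
    [Fintype I] [Nonempty I] [∀ i, Fintype (Θi i)] [∀ i, Nonempty (Θi i)]
    (ρ : SolutionNotion I Θi X) (hD : Dissectible ρ) (hM : Monotonic ρ)
    (f : (∀ j, Θi j) → X)
    (E E' : Set (∀ j, Θi j)) (hE : E.Nonempty) (hE' : E'.Nonempty)
    (θ : ∀ j, Θi j) (hθ : θ ∈ E) (hEE' : E ⊆ E') :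
    canon ρ f E θ ⊆ canon ρ f E' θ := by
  simp only [canon, if_pos hθ, if_pos (hEE' hθ)]
  exact Set.iUnion_mono fun n =>
    canonN_increasing ρ hD hM f E E' hE hE' hEE' n θ hθ

end SeqMech
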